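/- Let ν be a Borel probability measure on a compact hypersurface M ⊂ ℝ^d satisfying the ball growth condition ν(B_r) ≤ C r^α for all balls B_r of radius r ∈ (0,1], for some 0 < α ≤ d−1. Suppose moreover that the extension estimate ‖(g dν)^∧‖_{L^p(ℝ^d)} ≤ C‖g‖_{L²(dν)} holds for all continuous g, where M is the graph of a smooth function with bounded second derivatives (so M lies within distance O(r²) of its tangent plane over balls of radius r). If there exist arbitrarily small radii r with ν(B_r) ≥ c r^α, then p ≥ 2(d+1)/α. -/

import Mathlib

open MeasureTheory Complex Filter
open scoped ENNReal

noncomputable def e (z : ℝ) : ℂ := Complex.exp (2 * Real.pi * Complex.I * z)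

def unitCube (m : ℕ) : Set (Fin m → ℝ) := Set.univ.pi fun _ => Set.Icc 0 1

lemma taylor2 {E : Type*} [NormedAddCommGroup E] [NormedSpace ℝ E]
    (f : E → ℝ) (hf : ContDiff ℝ 2 f) (H : ℝ)
    (hH : ∀ η, ‖iteratedFDeriv ℝ 2 f η‖ ≤ H) (z y : E) :
    ‖f y - f z - fderiv ℝ f z (y - z)‖ ≤ H * ‖y - z‖ * ‖y - z‖ := by
  have hdiff : Differentiable ℝ f := hf.differentiable (by norm_num)
  have hderiv : Differentiable ℝ (fderiv ℝ f) :=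
    (hf.fderiv_right (m := 1) (by norm_num)).differentiable (by norm_num)
  have hH0 : 0 ≤ H := le_trans (norm_nonneg _) (hH z)
  have hlip : LipschitzWith H.toNNReal (fderiv ℝ f) := by
    apply lipschitzWith_of_nnnorm_fderiv_le hderiv
    intro x
    rw [← NNReal.coe_le_coe]
    simp only [coe_nnnorm, Real.coe_toNNReal _ hH0]
    calc ‖fderiv ℝ (fderiv ℝ f) x‖ = ‖iteratedFDeriv ℝ 1 (fderiv ℝ f) x‖ := by
          rw [← norm_iteratedFDeriv_fderiv, norm_iteratedFDeriv_zero]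
      _ = ‖iteratedFDeriv ℝ 2 f x‖ := norm_iteratedFDeriv_fderiv
      _ ≤ H := hH x
  have key := (convex_closedBall z ‖y - z‖).norm_image_sub_le_of_norm_hasFDerivWithin_le'
    (f := f) (f' := fderiv ℝ f) (φ := fderiv ℝ f z) (x := z) (y := y)
    (C := H * ‖y - z‖)
    (fun x _ => (hdiff x).hasFDerivAt.hasFDerivWithinAt)
    (fun x hx => by
      calc ‖fderiv ℝ f x - fderiv ℝ f z‖ ≤ H.toNNReal * ‖x - z‖ := by
            simpa [dist_eq_norm] using hlip.dist_le_mul x z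
        _ ≤ H * ‖y - z‖ := by
            rw [Real.coe_toNNReal _ hH0]
            apply mul_le_mul_of_nonneg_left _ hH0
            simpa [dist_eq_norm] using hx)
    (Metric.mem_closedBall_self (norm_nonneg _))
    (by simp [Metric.mem_closedBall, dist_eq_norm])
  linarith [key]


lemma e_mul (a b : ℝ) : e a * e b = e (a + b) := by
  rw [e, e, e, ← Complex.exp_add]; congr 1; push_cast; ring

lemma norm_e (z : ℝ) : ‖e z‖ = 1 := by
  rw [e, Complex.norm_exp]
  have : (2 * ↑Real.pi * Complex.I * ↑z).re = 0 := by simp [Complex.mul_re, Complex.mul_im]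
  rw [this, Real.exp_zero]

lemma re_ofReal_mul_e (t s : ℝ) : ((t:ℂ) * e s).re = t * Real.cos (2 * Real.pi * s) := by
  have h : (2 * ↑Real.pi * Complex.I * (s:ℂ)) = ↑(2 * Real.pi * s) * Complex.I := by
    push_cast; ring
  rw [e, h, Complex.re_ofReal_mul, Complex.exp_ofReal_mul_I_re]

lemma cos_ge_half {s : ℝ} (h : |s| ≤ 1/8) : 1/2 ≤ Real.cos (2 * Real.pi * s) := by
  have habs : |2 * Real.pi * s| ≤ 1 := by
    rw [abs_mul, abs_mul]
    have hπ : |Real.pi| = Real.pi := abs_of_pos Real.pi_pos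
    have h4 := Real.pi_le_four
    have h2 : |(2:ℝ)| = 2 := by norm_num
    rw [h2, hπ]
    nlinarith [abs_nonneg s, Real.pi_pos]
  have hcos := Real.one_sub_sq_div_two_le_cos (x := 2 * Real.pi * s)
  nlinarith [_root_.sq_abs (2*Real.pi*s), sq_nonneg (|2*Real.pi*s| - 1), abs_nonneg (2*Real.pi*s)]

lemma linmap_sum (m : ℕ) (L : (Fin m → ℝ) →L[ℝ] ℝ) (v : Fin m → ℝ) :
    L v = ∑ i, v i * L (Pi.single i 1) := by
  have hv : v = ∑ i : Fin m, v i • (Pi.single i (1:ℝ) : Fin m → ℝ) := by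
    ext j
    rw [Finset.sum_apply]
    simp [Pi.single_apply, Finset.sum_ite_eq']
  conv_lhs => rw [hv]
  rw [map_sum]
  congr 1; ext i; rw [ContinuousLinearMap.map_smul]; simp [smul_eq_mul]

lemma volS (m : ℕ) (w : Fin m → ℝ) (A B : ℝ) (hA : 0 ≤ A) (hB : 0 ≤ B) :
    volume {x : (Fin m → ℝ) × ℝ | (∀ i, |x.1 i + w i * x.2| ≤ A) ∧ |x.2| ≤ B}
      = ENNReal.ofReal ((2*A)^m * (2*B)) := by
  set S := {x : (Fin m → ℝ) × ℝ | (∀ i, |x.1 i + w i * x.2| ≤ A) ∧ |x.2| ≤ B} with hS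
  have hclosed : IsClosed S := by
    have : S = (⋂ i, {x : (Fin m → ℝ) × ℝ | |x.1 i + w i * x.2| ≤ A}) ∩
        {x : (Fin m → ℝ) × ℝ | |x.2| ≤ B} := by
      ext x; simp only [hS, Set.mem_inter_iff, Set.mem_iInter, Set.mem_setOf_eq] <;> tauto
    rw [this]
    refine (isClosed_iInter fun i => ?_).inter ?_
    · exact isClosed_le (by fun_prop) continuous_const
    · exact isClosed_le (by fun_prop) continuous_const
  have hmeas : MeasurableSet S := hclosed.measurableSet
  rw [MeasureTheory.Measure.volume_eq_prod, MeasureTheory.Measure.prod_apply_symm hmeas]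
  have hslice : ∀ t : ℝ, volume ((fun v : Fin m → ℝ => (v, t)) ⁻¹' S)
      = Set.indicator (Set.Icc (-B) B) (fun _ => ENNReal.ofReal ((2*A)^m)) t := by
    intro t
    by_cases ht : |t| ≤ B
    · have : ((fun v : Fin m → ℝ => (v, t)) ⁻¹' S)
          = Set.univ.pi (fun i => Set.Icc (-A - w i * t) (A - w i * t)) := by
        ext v
        simp only [hS, Set.mem_preimage, Set.mem_setOf_eq, Set.mem_pi, Set.mem_univ,
          Set.mem_Icc, forall_true_left, ht, and_true]
        constructor
        · intro h i; have := abs_le.mp (h i); constructor <;> linarith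
        · intro h i; rw [abs_le]; have := h i; constructor <;> linarith
      rw [this, volume_pi_pi]
      have : ∀ i, volume (Set.Icc (-A - w i * t) (A - w i * t)) = ENNReal.ofReal (2*A) := by
        intro i; rw [Real.volume_Icc]; ring_nf
      simp only [this, Finset.prod_const, Finset.card_univ, Fintype.card_fin]
      rw [Set.indicator_of_mem (by simpa [Set.mem_Icc, abs_le] using ht),
        ← ENNReal.ofReal_pow (by linarith)]
    · have : ((fun v : Fin m → ℝ => (v, t)) ⁻¹' S) = ∅ := by
        ext v; simp [hS, ht]
      rw [this, Set.indicator_of_notMem (by simpa [Set.mem_Icc, abs_le] using ht)]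
      simp
  rw [lintegral_congr hslice, lintegral_indicator measurableSet_Icc _]
  rw [setLIntegral_const, Real.volume_Icc]
  rw [← ENNReal.ofReal_mul (by positivity)]
  ring_nf

lemma Sclosed (m : ℕ) (w : Fin m → ℝ) (A B : ℝ) :
    IsClosed {x : (Fin m → ℝ) × ℝ | (∀ i, |x.1 i + w i * x.2| ≤ A) ∧ |x.2| ≤ B} := by
  have : {x : (Fin m → ℝ) × ℝ | (∀ i, |x.1 i + w i * x.2| ≤ A) ∧ |x.2| ≤ B}
      = (⋂ i, {x : (Fin m → ℝ) × ℝ | |x.1 i + w i * x.2| ≤ A}) ∩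
      {x : (Fin m → ℝ) × ℝ | |x.2| ≤ B} := by
    ext x; simp only [Set.mem_inter_iff, Set.mem_iInter, Set.mem_setOf_eq]
  rw [this]
  refine (isClosed_iInter fun i => ?_).inter ?_
  · exact isClosed_le (by fun_prop) continuous_const
  · exact isClosed_le (by fun_prop) continuous_const

lemma cont_e : Continuous e := by
  unfold e; fun_prop

set_option maxHeartbeats 1000000 in
lemma keylemma (m : ℕ) (α p C c ρ δ H : ℝ)
    (hα0 : 0 < α) (hp : 1 ≤ p) (hC : 0 < C) (hc : 0 < c) (hρ : 0 < ρ) (hρ2 : ρ ≤ 1/2)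
    (Pi : (Fin m → ℝ) → ℝ) (hPi : ContDiff ℝ 2 Pi)
    (hHess : ∀ η, ‖iteratedFDeriv ℝ 2 Pi η‖ ≤ H)
    (hδ : 0 < δ) (hδ8 : δ * (3*m + 9*H) ≤ 1/8)
    (ν : Measure ((Fin m → ℝ) × ℝ)) [IsProbabilityMeasure ν]
    (hsupp : ν {ξ : (Fin m → ℝ) × ℝ | ¬ (ξ.1 ∈ unitCube m ∧ ξ.2 = Pi ξ.1)} = 0)
    (a : (Fin m → ℝ) × ℝ)
    (hgrow : ν (Metric.ball a (2*ρ)) ≤ ENNReal.ofReal (C * (2*ρ)^α))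
    (hbig : ENNReal.ofReal (c * ρ^α) ≤ ν (Metric.ball a ρ))
    (hext : ∀ g : ((Fin m → ℝ) × ℝ) → ℂ, Continuous g →
      eLpNorm (fun y : (Fin m → ℝ) × ℝ =>
          ∫ ξ, g ξ * e (-(∑ i, ξ.1 i * y.1 i + ξ.2 * y.2)) ∂ν) (ENNReal.ofReal p) volume
        ≤ ENNReal.ofReal (C * Real.sqrt (∫ ξ, ‖g ξ‖ ^ 2 ∂ν))) :
    c * ρ^α / 2 * ((2*(δ/ρ))^m * (2*(δ/ρ^2)))^(1/p) ≤ C * Real.sqrt (4*C*(2*ρ)^α) := by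
  have hH0 : 0 ≤ H := le_trans (norm_nonneg _) (hHess 0)
  have hρα : (0:ℝ) < ρ ^ α := Real.rpow_pos_of_pos hρ α
  have hcρ : (0:ℝ) < c * ρ ^ α := mul_pos hc hρα
  -- find a point b on the graph near a
  have hνball : ν (Metric.ball a ρ) ≠ 0 :=
    ne_of_gt (lt_of_lt_of_le (ENNReal.ofReal_pos.2 hcρ) hbig)
  have hbex : ∃ b ∈ Metric.ball a ρ, b.1 ∈ unitCube m ∧ b.2 = Pi b.1 := by
    by_contra hno
    push_neg at hno
    refine hνball (measure_mono_null ?_ hsupp)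
    intro ξ hξ
    simp only [Set.mem_setOf_eq]
    intro hgood
    exact hno ξ hξ hgood.1 hgood.2
  obtain ⟨b, hbmem, -, hbgraph⟩ := hbex
  set L := fderiv ℝ Pi b.1 with hL
  set w : Fin m → ℝ := fun i => L (_root_.Pi.single i (1:ℝ)) with hw
  set g0 : (Fin m → ℝ) × ℝ → ℝ := fun ξ => max 0 (2 - dist ξ a / ρ) with hg0
  have hg0cont : Continuous g0 := by fun_prop
  have hg0nonneg : ∀ ξ, 0 ≤ g0 ξ := fun ξ => le_max_left _ _
  have hg0le2 : ∀ ξ, g0 ξ ≤ 2 := by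
    intro ξ
    apply max_le (by norm_num)
    have : 0 ≤ dist ξ a / ρ := by positivity
    linarith
  have hg0zero : ∀ ξ, 2*ρ ≤ dist ξ a → g0 ξ = 0 := by
    intro ξ hξ
    apply max_eq_left
    have : 2 ≤ dist ξ a / ρ := by rw [le_div_iff₀ hρ]; linarith
    linarith
  have hg0one : ∀ ξ, dist ξ a < ρ → 1 ≤ g0 ξ := by
    intro ξ hξ
    apply le_max_of_le_right
    have : dist ξ a / ρ < 1 := (div_lt_one hρ).2 hξ
    linarith
  set g : (Fin m → ℝ) × ℝ → ℂ := fun ξ => ((g0 ξ : ℝ) : ℂ) with hg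
  have hgcont : Continuous g := Complex.continuous_ofReal.comp hg0cont
  have hφcont : ∀ y : (Fin m → ℝ) × ℝ,
      Continuous (fun ξ : (Fin m → ℝ) × ℝ => ∑ i, ξ.1 i * y.1 i + ξ.2 * y.2) := by
    intro y
    apply Continuous.add ?_ (by fun_prop)
    exact continuous_finset_sum _ (fun i _ => by fun_prop)
  set f : ((Fin m → ℝ) × ℝ) → ℂ :=
    fun y => ∫ ξ, g ξ * e (-(∑ i, ξ.1 i * y.1 i + ξ.2 * y.2)) ∂ν with hf
  have hint : ∀ y : (Fin m → ℝ) × ℝ,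
      Integrable (fun ξ => g ξ * e (-(∑ i, ξ.1 i * y.1 i + ξ.2 * y.2))) ν := by
    intro y
    refine Integrable.mono' (integrable_const 2) ?_ (ae_of_all _ fun ξ => ?_)
    · exact (hgcont.mul (cont_e.comp ((hφcont y).neg))).aestronglyMeasurable
    · rw [norm_mul, norm_e, mul_one, hg, Complex.norm_real, Real.norm_eq_abs,
        _root_.abs_of_nonneg (hg0nonneg ξ)]
      exact hg0le2 ξ
  -- the tube S
  set S := {y : (Fin m → ℝ) × ℝ | (∀ i, |y.1 i + w i * y.2| ≤ δ/ρ) ∧ |y.2| ≤ δ/ρ^2} with hS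
  -- pointwise lower bound
  have hpt : ∀ y ∈ S, c * ρ^α / 2 ≤ ‖f y‖ := by
    intro y hy
    obtain ⟨hy1, hy2⟩ := hy
    have hphase : ∀ ξ : (Fin m → ℝ) × ℝ, ξ.2 = Pi ξ.1 → dist ξ a < 2*ρ →
        |(∑ i, b.1 i * y.1 i + b.2 * y.2) - (∑ i, ξ.1 i * y.1 i + ξ.2 * y.2)| ≤ 1/8 := by
      intro ξ hgr hdist
      have hdb : dist ξ.1 b.1 ≤ 3*ρ := by
        have h1 : dist ξ b ≤ dist ξ a + dist a b := dist_triangle _ _ _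
        have h2 : dist a b < ρ := by rw [dist_comm]; exact Metric.mem_ball.mp hbmem
        have h3 : dist ξ.1 b.1 ≤ dist ξ b := by rw [Prod.dist_eq]; exact le_max_left _ _
        linarith
      have hcoord : ∀ i, |ξ.1 i - b.1 i| ≤ 3*ρ := by
        intro i
        have h := dist_le_pi_dist ξ.1 b.1 i
        rw [Real.dist_eq] at h
        linarith
      have hnorm : ‖ξ.1 - b.1‖ ≤ 3*ρ := by rw [← dist_eq_norm]; exact hdb
      have htay : |Pi ξ.1 - Pi b.1 - L (ξ.1 - b.1)| ≤ H * (3*ρ) * (3*ρ) := by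
        have h := taylor2 Pi hPi H hHess b.1 ξ.1
        rw [Real.norm_eq_abs] at h
        have h1 : (0:ℝ) ≤ ‖ξ.1 - b.1‖ := norm_nonneg _
        have h3 : ‖ξ.1 - b.1‖ * ‖ξ.1 - b.1‖ ≤ (3*ρ)*(3*ρ) :=
          mul_le_mul hnorm hnorm h1 (by linarith)
        have h2 : H * ‖ξ.1 - b.1‖ * ‖ξ.1 - b.1‖ ≤ H * (3*ρ) * (3*ρ) := by
          calc H * ‖ξ.1 - b.1‖ * ‖ξ.1 - b.1‖ = H * (‖ξ.1 - b.1‖ * ‖ξ.1 - b.1‖) := by ring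
            _ ≤ H * ((3*ρ)*(3*ρ)) := mul_le_mul_of_nonneg_left h3 hH0
            _ = H * (3*ρ) * (3*ρ) := by ring
        exact le_trans h h2
      have hLsum : L (ξ.1 - b.1) = ∑ i, (ξ.1 i - b.1 i) * w i := by
        rw [linmap_sum m L (ξ.1 - b.1)]
        exact Finset.sum_congr rfl fun i _ => by simp [hw]
      have hkey : (∑ i, ξ.1 i * y.1 i) - (∑ i, b.1 i * y.1 i)
          - (∑ i, (ξ.1 i - b.1 i) * (y.1 i + w i * y.2))
          + y.2 * (∑ i, (ξ.1 i - b.1 i) * w i) = 0 := by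
        rw [← Finset.sum_sub_distrib, ← Finset.sum_sub_distrib, Finset.mul_sum,
          ← Finset.sum_add_distrib]
        exact Finset.sum_eq_zero fun i _ => by ring
      have hid : (∑ i, ξ.1 i * y.1 i + ξ.2 * y.2) - (∑ i, b.1 i * y.1 i + b.2 * y.2)
          = (∑ i, (ξ.1 i - b.1 i) * (y.1 i + w i * y.2))
          + y.2 * (Pi ξ.1 - Pi b.1 - L (ξ.1 - b.1)) := by
        rw [hLsum, hgr, hbgraph]
        linarith [hkey]
      have hδρ : 0 ≤ δ/ρ := by positivity
      have hT1 : |∑ i, (ξ.1 i - b.1 i) * (y.1 i + w i * y.2)| ≤ m * (3*ρ * (δ/ρ)) := by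
        calc |∑ i, (ξ.1 i - b.1 i) * (y.1 i + w i * y.2)|
            ≤ ∑ i, |(ξ.1 i - b.1 i) * (y.1 i + w i * y.2)| := Finset.abs_sum_le_sum_abs _ _
          _ ≤ ∑ _i : Fin m, 3*ρ * (δ/ρ) := by
              refine Finset.sum_le_sum fun i _ => ?_
              rw [abs_mul]
              exact mul_le_mul (hcoord i) (hy1 i) (abs_nonneg _) (by linarith)
          _ = m * (3*ρ * (δ/ρ)) := by
              rw [Finset.sum_const, Finset.card_univ]; simp [nsmul_eq_mul]
      have hT2 : |y.2 * (Pi ξ.1 - Pi b.1 - L (ξ.1 - b.1))| ≤ (δ/ρ^2) * (H * (3*ρ) * (3*ρ)) := by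
        rw [abs_mul]
        exact mul_le_mul hy2 htay (abs_nonneg _) (by positivity)
      have hc1 : (m:ℝ) * (3*ρ * (δ/ρ)) = 3*m*δ := by field_simp
      have hc2 : (δ/ρ^2) * (H * (3*ρ) * (3*ρ)) = 9*H*δ := by field_simp; ring
      rw [abs_sub_comm, hid]
      calc |(∑ i, (ξ.1 i - b.1 i) * (y.1 i + w i * y.2))
          + y.2 * (Pi ξ.1 - Pi b.1 - L (ξ.1 - b.1))|
          ≤ |∑ i, (ξ.1 i - b.1 i) * (y.1 i + w i * y.2)|
            + |y.2 * (Pi ξ.1 - Pi b.1 - L (ξ.1 - b.1))| := abs_add_le _ _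
        _ ≤ 3*m*δ + 9*H*δ := by rw [← hc1, ← hc2]; exact add_le_add hT1 hT2
        _ ≤ 1/8 := by nlinarith
    set θ : ℝ := ∑ i, b.1 i * y.1 i + b.2 * y.2 with hθ
    have hint2 : Integrable
        (fun ξ : (Fin m → ℝ) × ℝ => g ξ * e (θ - (∑ i, ξ.1 i * y.1 i + ξ.2 * y.2))) ν := by
      refine ((hint y).const_mul (e θ)).congr (ae_of_all _ fun ξ => ?_)
      simp only [sub_eq_add_neg, ← e_mul]
      ring
    have h2 : e θ * f y = ∫ ξ, g ξ * e (θ - (∑ i, ξ.1 i * y.1 i + ξ.2 * y.2)) ∂ν := by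
      rw [hf]
      rw [← integral_const_mul]
      refine integral_congr_ae (ae_of_all _ fun ξ => ?_)
      simp only [sub_eq_add_neg, ← e_mul]
      ring
    have h3 : (∫ ξ, g ξ * e (θ - (∑ i, ξ.1 i * y.1 i + ξ.2 * y.2)) ∂ν).re
        = ∫ ξ, g0 ξ * Real.cos (2*Real.pi*(θ - (∑ i, ξ.1 i * y.1 i + ξ.2 * y.2))) ∂ν := by
      rw [← RCLike.re_to_complex, ← integral_re hint2]
      refine integral_congr_ae (ae_of_all _ fun ξ => ?_)
      simp only [RCLike.re_to_complex]
      exact re_ofReal_mul_e _ _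
    have h4 : ∫ ξ, (Metric.ball a ρ).indicator (fun _ => (1/2 : ℝ)) ξ ∂ν
        ≤ ∫ ξ, g0 ξ * Real.cos (2*Real.pi*(θ - (∑ i, ξ.1 i * y.1 i + ξ.2 * y.2))) ∂ν := by
      refine integral_mono_ae
        ((integrable_const _).indicator Metric.isOpen_ball.measurableSet) ?_ ?_
      · refine Integrable.mono' (integrable_const 2) ?_ (ae_of_all _ fun ξ => ?_)
        · refine (hg0cont.mul (Real.continuous_cos.comp ?_)).aestronglyMeasurable
          exact (continuous_const.mul ((continuous_const.sub (hφcont y))))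
        · rw [Real.norm_eq_abs, abs_mul]
          have hco := Real.abs_cos_le_one (2*Real.pi*(θ - (∑ i, ξ.1 i * y.1 i + ξ.2 * y.2)))
          have h0 := hg0nonneg ξ
          have h2' := hg0le2 ξ
          rw [_root_.abs_of_nonneg h0]
          nlinarith
      · have hae : ∀ᵐ ξ ∂ν, ξ.1 ∈ unitCube m ∧ ξ.2 = Pi ξ.1 := ae_iff.mpr hsupp
        filter_upwards [hae] with ξ hgood
        by_cases hdist : dist ξ a < 2*ρ
        · have hcos := cos_ge_half (hphase ξ hgood.2 hdist)
          by_cases hmem : ξ ∈ Metric.ball a ρ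
          · rw [Set.indicator_of_mem hmem]
            have h1g := hg0one ξ (Metric.mem_ball.mp hmem)
            nlinarith
          · rw [Set.indicator_of_notMem hmem]
            have h0 := hg0nonneg ξ
            nlinarith
        · push_neg at hdist
          rw [hg0zero ξ hdist, Set.indicator_of_notMem, zero_mul]
          intro hmem
          have := Metric.mem_ball.mp hmem
          linarith
    have h5 : ∫ ξ, (Metric.ball a ρ).indicator (fun _ => (1/2:ℝ)) ξ ∂ν
        = (ν (Metric.ball a ρ)).toReal * (1/2) := by
      rw [integral_indicator_const _ Metric.isOpen_ball.measurableSet]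
      simp [smul_eq_mul]
      rfl
    have h6 : c*ρ^α ≤ (ν (Metric.ball a ρ)).toReal := by
      have h := ENNReal.toReal_mono (measure_ne_top ν _) hbig
      rwa [ENNReal.toReal_ofReal hcρ.le] at h
    have h1 : (e θ * f y).re ≤ ‖f y‖ := by
      calc (e θ * f y).re ≤ ‖e θ * f y‖ := Complex.re_le_norm _
        _ = ‖f y‖ := by rw [norm_mul, norm_e, one_mul]
    have h23 : (e θ * f y).re
        = ∫ ξ, g0 ξ * Real.cos (2*Real.pi*(θ - (∑ i, ξ.1 i * y.1 i + ξ.2 * y.2))) ∂ν := by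
      rw [h2, h3]
    linarith
  -- Step B
  have hq0 : (ENNReal.ofReal p) ≠ 0 := by
    simp only [ne_eq, ENNReal.ofReal_eq_zero, not_le]; linarith
  have hqt : (ENNReal.ofReal p) ≠ ⊤ := ENNReal.ofReal_ne_top
  have hqR : (ENNReal.ofReal p).toReal = p := ENNReal.toReal_ofReal (by linarith)
  have hSmeas : MeasurableSet S := (Sclosed m w (δ/ρ) (δ/ρ^2)).measurableSet
  have hVol : volume S = ENNReal.ofReal ((2*(δ/ρ))^m * (2*(δ/ρ^2))) :=
    volS m w (δ/ρ) (δ/ρ^2) (by positivity) (by positivity)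
  have hlow : ENNReal.ofReal (c*ρ^α/2)
        * (ENNReal.ofReal ((2*(δ/ρ))^m * (2*(δ/ρ^2))))^((1:ℝ)/p)
      ≤ eLpNorm f (ENNReal.ofReal p) volume := by
    have hind := eLpNorm_indicator_const (μ := volume) (c := ((c*ρ^α/2 : ℝ)))
      hSmeas hq0 hqt
    rw [hVol, hqR] at hind
    have hnn : ‖(c*ρ^α/2 : ℝ)‖ₑ = ENNReal.ofReal (c*ρ^α/2) :=
      Real.enorm_eq_ofReal (le_of_lt (by positivity : (0:ℝ) < c*ρ^α/2))
    calc ENNReal.ofReal (c*ρ^α/2) * (ENNReal.ofReal ((2*(δ/ρ))^m * (2*(δ/ρ^2))))^((1:ℝ)/p)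
        = eLpNorm (S.indicator fun _ => ((c*ρ^α/2 : ℝ))) (ENNReal.ofReal p) volume := by
          rw [hind, hnn]
      _ ≤ eLpNorm f (ENNReal.ofReal p) volume := by
          refine eLpNorm_mono fun y => ?_
          by_cases hyS : y ∈ S
          · rw [Set.indicator_of_mem hyS, Real.norm_eq_abs, _root_.abs_of_nonneg (by positivity)]
            exact hpt y hyS
          · rw [Set.indicator_of_notMem hyS, norm_zero]
            exact norm_nonneg _
  have hub := hext g hgcont
  have hgL2 : ∫ ξ, ‖g ξ‖^2 ∂ν ≤ 4*(C*(2*ρ)^α) := by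
    have hptg : ∀ ξ, ‖g ξ‖^2 ≤ (Metric.ball a (2*ρ)).indicator (fun _ => (4:ℝ)) ξ := by
      intro ξ
      have hng : ‖g ξ‖ = g0 ξ := by
        rw [hg, Complex.norm_real, Real.norm_eq_abs, _root_.abs_of_nonneg (hg0nonneg ξ)]
      by_cases hdist : ξ ∈ Metric.ball a (2*ρ)
      · rw [Set.indicator_of_mem hdist, hng]
        nlinarith [hg0nonneg ξ, hg0le2 ξ]
      · rw [Set.indicator_of_notMem hdist, hng,
          hg0zero ξ (le_of_not_gt fun hlt => hdist (Metric.mem_ball.mpr hlt))]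
        norm_num
    have hint3 : Integrable (fun ξ => ‖g ξ‖^2) ν := by
      refine Integrable.mono' (integrable_const 4) ?_ (ae_of_all _ fun ξ => ?_)
      · exact ((hgcont.norm.pow 2)).aestronglyMeasurable
      · rw [Real.norm_eq_abs, _root_.abs_of_nonneg (by positivity)]
        have hng : ‖g ξ‖ = g0 ξ := by
          rw [hg, Complex.norm_real, Real.norm_eq_abs, _root_.abs_of_nonneg (hg0nonneg ξ)]
        rw [hng]
        nlinarith [hg0nonneg ξ, hg0le2 ξ]
    calc ∫ ξ, ‖g ξ‖^2 ∂ν ≤ ∫ ξ, (Metric.ball a (2*ρ)).indicator (fun _ => (4:ℝ)) ξ ∂ν :=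
          integral_mono hint3
            ((integrable_const _).indicator Metric.isOpen_ball.measurableSet) hptg
      _ = (ν (Metric.ball a (2*ρ))).toReal * 4 := by
          rw [integral_indicator_const _ Metric.isOpen_ball.measurableSet]
          simp [smul_eq_mul]
          rfl
      _ ≤ 4*(C*(2*ρ)^α) := by
          have := ENNReal.toReal_le_of_le_ofReal (by positivity) hgrow
          linarith
  have hrhs : C * Real.sqrt (∫ ξ, ‖g ξ‖^2 ∂ν) ≤ C * Real.sqrt (4*C*(2*ρ)^α) := by
    refine mul_le_mul_of_nonneg_left ?_ hC.le
    refine Real.sqrt_le_sqrt ?_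
    linarith
  have hchain : ENNReal.ofReal (c*ρ^α/2)
        * (ENNReal.ofReal ((2*(δ/ρ))^m * (2*(δ/ρ^2))))^((1:ℝ)/p)
      ≤ ENNReal.ofReal (C * Real.sqrt (4*C*(2*ρ)^α)) :=
    le_trans hlow (le_trans hub (ENNReal.ofReal_le_ofReal hrhs))
  have hVpos : (0:ℝ) < (2*(δ/ρ))^m * (2*(δ/ρ^2)) := by positivity
  rw [ENNReal.ofReal_rpow_of_pos hVpos, ← ENNReal.ofReal_mul (by positivity)] at hchain
  exact (ENNReal.ofReal_le_ofReal_iff (by positivity)).1 hchain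

lemma key2 (m : ℕ) (α p C c ρ δ : ℝ) (hα0 : 0 < α) (hp : 1 ≤ p) (hC : 0 < C) (hc : 0 < c)
    (hρ : 0 < ρ) (hδ : 0 < δ)
    (hkey : c * ρ^α / 2 * ((2*(δ/ρ))^m * (2*(δ/ρ^2)))^((1:ℝ)/p)
      ≤ C * Real.sqrt (4*C*(2*ρ)^α)) :
    ρ ^ (α/2 - ((m:ℝ)+2)/p)
      ≤ 2*C*Real.sqrt (4*C) * 2^(α/2) / (c * ((2*δ)^m*(2*δ))^((1:ℝ)/p)) := by
  have hp0 : 0 < p := by linarith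
  set W : ℝ := (2*δ)^m * (2*δ) with hWdef
  have hW : 0 < W := by positivity
  set q : ℝ := ((m:ℝ)+2)/p with hq
  have hρq : 0 < ρ ^ q := Real.rpow_pos_of_pos hρ _
  have hρα2 : 0 < ρ ^ (α/2) := Real.rpow_pos_of_pos hρ _
  have hWp : 0 < W ^ ((1:ℝ)/p) := Real.rpow_pos_of_pos hW _
  -- rewrite the volume factor
  have hVW : (2*(δ/ρ))^m * (2*(δ/ρ^2)) = W / ρ^(m+2 : ℕ) := by
    rw [hWdef]
    field_simp
    have h1 : ρ ^ m * ρ⁻¹ ^ m = 1 := by rw [← mul_pow, mul_inv_cancel₀ hρ.ne', one_pow]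
    linear_combination (δ ^ m * ρ ^ 2 * 2 ^ m) * h1
  have hρm2 : (ρ^(m+2 : ℕ) : ℝ) = ρ ^ (((m:ℝ)+2)) := by
    rw [← Real.rpow_natCast ρ (m+2)]
    push_cast
    ring_nf
  have hpow : ((2*(δ/ρ))^m * (2*(δ/ρ^2)))^((1:ℝ)/p) = W^((1:ℝ)/p) / ρ ^ q := by
    rw [hVW, hρm2, Real.div_rpow hW.le (Real.rpow_pos_of_pos hρ _).le,
      ← Real.rpow_mul hρ.le, hq]
    congr 1
    ring
  -- rewrite the sqrt factor
  have h4C : (0:ℝ) ≤ 4*C := by linarith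
  have hsqrt : Real.sqrt (4*C*(2*ρ)^α) = Real.sqrt (4*C) * (2^(α/2) * ρ^(α/2)) := by
    rw [Real.sqrt_mul h4C, Real.sqrt_eq_rpow ((2*ρ)^α), ← Real.rpow_mul (by linarith),
      show α * (1/2) = α/2 by ring, Real.mul_rpow (by norm_num) hρ.le]
  rw [hpow, hsqrt] at hkey
  have hkey' : c * ρ^α * W^((1:ℝ)/p) ≤ 2*C*Real.sqrt (4*C) * 2^(α/2) * ρ^(α/2) * ρ^q := by
    rw [show c * ρ^α / 2 * (W^((1:ℝ)/p) / ρ^q) = (c * ρ^α * W^((1:ℝ)/p))/(2*ρ^q) by ring] at hkey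
    rw [div_le_iff₀ (by positivity)] at hkey
    calc c * ρ^α * W^((1:ℝ)/p) ≤ C * (Real.sqrt (4*C) * (2^(α/2) * ρ^(α/2))) * (2*ρ^q) := hkey
      _ = 2*C*Real.sqrt (4*C) * 2^(α/2) * ρ^(α/2) * ρ^q := by ring
  have hid : ρ ^ (α/2 - q) = ρ^α / (ρ^q * ρ^(α/2)) := by
    rw [eq_div_iff (by positivity)]
    rw [← Real.rpow_add hρ, ← Real.rpow_add hρ]
    congr 1
    ring
  rw [hid, div_le_div_iff₀ (by positivity) (by positivity)]
  nlinarith [hkey', Real.rpow_nonneg hρ.le α, hρq.le, hρα2.le]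


theorem stmt10 (d : ℕ) (hd : 2 ≤ d) (α p : ℝ) (hα0 : 0 < α) (hα1 : α ≤ (d:ℝ) - 1)
    (hp : 1 ≤ p)
    (Pi : (Fin (d-1) → ℝ) → ℝ) (hPi : ContDiff ℝ 2 Pi)
    (H : ℝ) (hHess : ∀ η, ‖iteratedFDeriv ℝ 2 Pi η‖ ≤ H)
    (ν : Measure ((Fin (d-1) → ℝ) × ℝ)) [IsProbabilityMeasure ν]
    (hsupp : ν {ξ : (Fin (d-1) → ℝ) × ℝ | ¬ (ξ.1 ∈ unitCube (d-1) ∧ ξ.2 = Pi ξ.1)} = 0)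
    (C c : ℝ) (hC : 0 < C) (hc : 0 < c)
    (hgrowth : ∀ (x : (Fin (d-1) → ℝ) × ℝ) (r : ℝ), 0 < r → r ≤ 1 →
      ν (Metric.ball x r) ≤ ENNReal.ofReal (C * r ^ α))
    (hext : ∀ g : ((Fin (d-1) → ℝ) × ℝ) → ℂ, Continuous g →
      eLpNorm (fun x : (Fin (d-1) → ℝ) × ℝ =>
          ∫ ξ, g ξ * e (-(∑ i, ξ.1 i * x.1 i + ξ.2 * x.2)) ∂ν)
        (ENNReal.ofReal p) volume
        ≤ ENNReal.ofReal (C * Real.sqrt (∫ ξ, ‖g ξ‖ ^ 2 ∂ν)))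
    (x : ℕ → (Fin (d-1) → ℝ) × ℝ) (r : ℕ → ℝ) (hr0 : ∀ j, 0 < r j)
    (hrlim : Tendsto r atTop (nhds 0))
    (hbig : ∀ j, ENNReal.ofReal (c * r j ^ α) ≤ ν (Metric.ball (x j) (r j))) :
    2 * ((d:ℝ) + 1) / α ≤ p := by
  by_contra hcon
  push_neg at hcon
  have hmcast : (((d-1 : ℕ):ℝ)+2) = (d:ℝ)+1 := by
    rw [Nat.cast_sub (by omega : 1 ≤ d)]
    push_cast
    ring
  have hH0 : 0 ≤ H := le_trans (norm_nonneg _) (hHess 0)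
  have hmR : (0:ℝ) ≤ ((d-1 : ℕ):ℝ) := Nat.cast_nonneg (d-1)
  set δ : ℝ := 1/(8*(3*((d-1 : ℕ):ℝ)+9*H+1)) with hδdef
  have hδ : 0 < δ := by rw [hδdef]; positivity
  have hδ8 : δ * (3*((d-1 : ℕ):ℝ)+9*H) ≤ 1/8 := by
    rw [hδdef, show (1/(8*(3*((d-1 : ℕ):ℝ)+9*H+1))) * (3*((d-1 : ℕ):ℝ)+9*H)
      = (3*((d-1 : ℕ):ℝ)+9*H)/(8*(3*((d-1 : ℕ):ℝ)+9*H+1)) by ring,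
      div_le_div_iff₀ (by positivity) (by norm_num)]
    nlinarith
  set β : ℝ := α/2 - (((d-1 : ℕ):ℝ)+2)/p with hβdef
  set K3 : ℝ := 2*C*Real.sqrt (4*C) * 2^(α/2) / (c * ((2*δ)^(d-1)*(2*δ))^((1:ℝ)/p)) with hK3
  have hp0 : 0 < p := by linarith
  -- the per-scale bound
  have hperj : ∀ j, r j ≤ 1/2 → (r j) ^ β ≤ K3 := by
    intro j hj
    have hρ : 0 < r j := hr0 j
    have hkey := keylemma (d-1) α p C c (r j) δ H hα0 hp hC hc hρ hj Pi hPi hHess hδ hδ8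
      ν hsupp (x j)
      (hgrowth (x j) (2*(r j)) (by linarith) (by linarith))
      (hbig j) hext
    exact key2 (d-1) α p C c (r j) δ hα0 hp hC hc hρ hδ hkey
  have hsmall : ∀ᶠ j in atTop, r j ≤ 1/2 := by
    filter_upwards [hrlim.eventually_lt_const (by norm_num : (0:ℝ) < 1/2)] with j hj
    linarith
  have hβneg : β < 0 := by
    rw [hβdef, sub_neg, hmcast, lt_div_iff₀ hp0]
    have h1 : 0 < (d:ℝ) + 1 := by positivity
    have h2 : p * α < 2 * ((d:ℝ)+1) := (lt_div_iff₀ hα0).mp hcon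
    nlinarith
  -- r j ^ β → ∞
  have htend : Tendsto (fun j => (r j) ^ β) atTop atTop := by
    have h0 : Tendsto r atTop (nhdsWithin 0 (Set.Ioi 0)) :=
      tendsto_nhdsWithin_of_tendsto_nhds_of_eventually_within r hrlim
        (Eventually.of_forall fun j => Set.mem_Ioi.mpr (hr0 j))
    have hlog : Tendsto (fun j => Real.log (r j)) atTop atBot :=
      Real.tendsto_log_nhdsGT_zero.comp h0
    have hmul : Tendsto (fun j => β * Real.log (r j)) atTop atTop :=
      (tendsto_const_mul_atTop_of_neg hβneg).mpr hlog
    have hexp : Tendsto (fun j => Real.exp (β * Real.log (r j))) atTop atTop :=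
      Real.tendsto_exp_atTop.comp hmul
    refine hexp.congr fun j => ?_
    rw [Real.rpow_def_of_pos (hr0 j), mul_comm]
  obtain ⟨j, hj1, hj2⟩ := ((htend.eventually_gt_atTop K3).and hsmall).exists
  exact absurd (hperj j hj2) (not_le.mpr hj1)
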